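/- Let q ≥ 3 and n ≥ 3, and let w ∈ A_q(n) ∪ B_q(n). Then every proper suffix v of w satisfies |v|_0 ≥ |v|_1, and every nonempty suffix v of w with |v| < ⌊(n+1)/2⌋ satisfies |v|_0 > |v|_1. -/
import Mathlib


/-- Value of a letter: 1 ↦ +1, 0 ↦ -1, other letters ↦ 0. -/
def mval (a : ℕ) : ℤ := if a = 1 then 1 else if a = 0 then -1 else 0

/-- Value-sum of a word. -/
def vsum (w : List ℕ) : ℤ := (w.map mval).sum

/-- A (q-2)-colored Motzkin word over the alphabet Z_q = {0,...,q-1}: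
all letters < q, every prefix has nonnegative value-sum, total value-sum 0. -/
def IsMotzkinWord (q : ℕ) (w : List ℕ) : Prop :=
  (∀ a ∈ w, a < q) ∧ (∀ u, u <+: w → 0 ≤ vsum u) ∧ vsum w = 0

/-- The set 𝓜_{q-2}(n) of (q-2)-colored Motzkin words of length n. -/
def MotzkinSet (q n : ℕ) : Set (List ℕ) := {w | w.length = n ∧ IsMotzkinWord q w}

/-- M_{q-2}(n), the number of (q-2)-colored Motzkin words of length n. -/
noncomputable def Mnum (q n : ℕ) : ℕ := (MotzkinSet q n).ncard

/-- The set Ê_{q-2}(n) of elevated (q-2)-colored Motzkin words of length n: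
words 1α0 with α ∈ 𝓜_{q-2}(n-2). -/
def ElevatedSet (q n : ℕ) : Set (List ℕ) :=
  {w | w.length = n ∧ ∃ α ∈ MotzkinSet q (n - 2), w = 1 :: (α ++ [0])}

/-- The set A_q(n). -/
def SetA (q n : ℕ) : Set (List ℕ) :=
  {w | ∃ i ≤ n / 2, ∃ α ∈ MotzkinSet q i, ∃ β ∈ ElevatedSet q (n - i), w = α ++ β} \
    {w | ∃ α ∈ ElevatedSet q (n / 2), ∃ β ∈ ElevatedSet q (n / 2), w = α ++ β}

/-- The set B_q(n). -/
def SetB (q n : ℕ) : Set (List ℕ) :=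
  {w | ∃ i ≤ n / 2 - 1, ∃ α ∈ MotzkinSet q i, ∃ β ∈ ElevatedSet q (n - i - 1),
    w = 1 :: (α ++ β)}

/-- The set C_q(n): words γ0 with γ a (q-2)-colored Motzkin word of length n-1
having no factor which is an elevated Motzkin word of length j ≥ ⌈n/2⌉. -/
def SetC (q n : ℕ) : Set (List ℕ) :=
  {w | ∃ γ ∈ MotzkinSet q (n - 1),
    (∀ j, (n + 1) / 2 ≤ j → ∀ β ∈ ElevatedSet q j, ¬ β <:+: γ) ∧ w = γ ++ [0]}

/-- The cross-bifix-free candidate set CBFS_q(n). -/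
def CBFS (q n : ℕ) : Set (List ℕ) := SetA q n ∪ SetB q n ∪ SetC q n

/-- A word is bifix-free if no nonempty proper prefix of it is also a suffix of it. -/
def BifixFree (w : List ℕ) : Prop :=
  ∀ u, u <+: w → u ≠ [] → u.length < w.length → ¬ u <:+ w

/-- BF_q(n): the set of bifix-free words of length n over Z_q. -/
def BF (q n : ℕ) : Set (List ℕ) := {w | w.length = n ∧ (∀ a ∈ w, a < q) ∧ BifixFree w}

/-- F_{k,q}(n): the number of words of length n over Z_q avoiding k consecutive 0's. -/
noncomputable def Fcount (k q n : ℕ) : ℕ :=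
  {w : List ℕ | w.length = n ∧ (∀ a ∈ w, a < q) ∧ ¬ List.replicate k 0 <:+: w}.ncard

/-- The set S_{k,q}(n) of Bajic--Stojanovic--Chee--Kiah type words: words s of length n
over Z_q with s₁ = ⋯ = s_k = 0, s_{k+1} ≠ 0, s_n ≠ 0, and such that the subword
s_{k+2} ⋯ s_{n-1} contains no k consecutive 0's. -/
def SetS (q k n : ℕ) : Set (List ℕ) :=
  {s | s.length = n ∧ (∀ a ∈ s, a < q) ∧ s.take k = List.replicate k 0 ∧
    s.getD k 0 ≠ 0 ∧ s.getLast? ≠ some 0 ∧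
    ¬ List.replicate k 0 <:+: (s.drop (k + 1)).take (n - k - 2)}

lemma vsum_append (a b : List ℕ) : vsum (a ++ b) = vsum a + vsum b := by
  simp [vsum]

lemma vsum_count (v : List ℕ) : vsum v = (v.count 1 : ℤ) - (v.count 0 : ℤ) := by
  induction v with
  | nil => simp [vsum]
  | cons a t ih =>
    have h : vsum (a :: t) = mval a + vsum t := by simp [vsum]
    by_cases h1 : a = 1
    · subst h1; simp [h, mval, ih, List.count_cons]; push_cast; ring
    · by_cases h0 : a = 0
      · subst h0; simp [h, mval, ih, List.count_cons]; push_cast; ring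
      · simp [h, mval, h1, h0, ih, List.count_cons]

lemma motzkin_suffix {q i : ℕ} {α v : List ℕ} (hα : α ∈ MotzkinSet q i) (hv : v <:+ α) :
    vsum v ≤ 0 := by
  obtain ⟨-, -, hpre, hsum⟩ := hα
  obtain ⟨t, rfl⟩ := hv
  have h0 := hpre t ⟨v, rfl⟩
  rw [vsum_append] at hsum
  linarith

lemma elev_suffix {q m : ℕ} {β v : List ℕ} (hβ : β ∈ ElevatedSet q m) (hv : v <:+ β) :
    vsum v ≤ 0 ∧ (v ≠ [] → v.length < β.length → vsum v ≤ -1) := by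
  obtain ⟨hlen, γ, hγ, rfl⟩ := hβ
  obtain ⟨-, hpre, hsum⟩ := hγ.2
  obtain ⟨t, ht⟩ := hv
  rcases t with _ | ⟨c, t'⟩
  · simp only [List.nil_append] at ht
    subst ht
    constructor
    · simp [vsum_append, vsum, mval] at hsum ⊢; linarith
    · intro _ hl; omega
  · rw [List.cons_append] at ht
    injection ht with hc h2
    by_cases hv0 : v = []
    · subst hv0; constructor
      · simp [vsum]
      · intro h; exact absurd rfl h
    · have hvl : 1 ≤ v.length := List.length_pos_iff.2 hv0
      have hle : t'.length ≤ γ.length := by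
        have := congrArg List.length h2
        simp at this; omega
      have htp : t' <+: γ :=
        List.prefix_of_prefix_length_le ⟨v, h2⟩ (γ.prefix_append [0]) hle
      have h0 : 0 ≤ vsum t' := hpre t' htp
      have heq : vsum t' + vsum v = vsum γ + vsum [0] := by
        rw [← vsum_append, ← vsum_append, h2]
      have h01 : vsum [0] = -1 := by simp [vsum, mval]
      have hm : vsum v ≤ -1 := by rw [h01, hsum] at heq; linarith
      exact ⟨by linarith, fun _ _ => hm⟩

lemma suffix_append_cases {v α β : List ℕ} (h : v <:+ α ++ β) :
    (∃ a, a <:+ α ∧ v = a ++ β) ∨ v <:+ β := by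
  obtain ⟨t, ht⟩ := h
  by_cases hle : t.length ≤ α.length
  · left
    refine ⟨α.drop t.length, List.drop_suffix _ _, ?_⟩
    have h2 := congrArg (List.drop t.length) ht
    rwa [List.drop_left, List.drop_append,
      Nat.sub_eq_zero_of_le hle, List.drop_zero] at h2
  · right
    have h2 := congrArg (List.drop t.length) ht
    rw [List.drop_left, List.drop_append,
      List.drop_eq_nil_of_le (by omega), List.nil_append] at h2
    rw [h2]; exact List.drop_suffix _ _

/-- For w ∈ A_q(n) ∪ B_q(n), every proper suffix v satisfies |v|₀ ≥ |v|₁,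
and every nonempty suffix v with |v| < ⌊(n+1)/2⌋ satisfies |v|₀ > |v|₁. -/
theorem setAB_suffix_counts (q n : ℕ) (hq : 3 ≤ q) (hn : 3 ≤ n)
    (w : List ℕ) (hw : w ∈ SetA q n ∪ SetB q n) :
    (∀ v, v <:+ w → v.length < w.length → v.count 1 ≤ v.count 0) ∧
    (∀ v, v <:+ w → v ≠ [] → v.length < (n + 1) / 2 → v.count 1 < v.count 0) := by
  -- reduce count statements to vsum
  have key : ∀ α β : List ℕ, ∀ i m : ℕ, α ∈ MotzkinSet q i → β ∈ ElevatedSet q m →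
      (n + 1) / 2 ≤ m →
      (∀ v, v <:+ α ++ β → vsum v ≤ 0) ∧
      (∀ v, v <:+ α ++ β → v ≠ [] → v.length < (n + 1) / 2 → vsum v ≤ -1) := by
    intro α β i m hα hβ hm
    constructor
    · intro v hv
      rcases suffix_append_cases hv with ⟨a, ha, rfl⟩ | hvb
      · have h1 := motzkin_suffix hα ha
        have h2 := (elev_suffix hβ (List.suffix_refl β)).1
        rw [vsum_append]; linarith
      · exact (elev_suffix hβ hvb).1
    · intro v hv hne hlen
      have hβl : β.length = m := hβ.1
      have hvβ : v <:+ β := by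
        rcases suffix_append_cases hv with ⟨a, ha, rfl⟩ | hvb
        · exfalso
          have : (a ++ β).length = a.length + β.length := by simp
          omega
        · exact hvb
      exact (elev_suffix hβ hvβ).2 hne (by omega)
  rcases hw with hA | hB
  · obtain ⟨⟨i, hi, α, hα, β, hβ, rfl⟩, -⟩ := hA
    have hm : (n + 1) / 2 ≤ n - i := by omega
    obtain ⟨k1, k2⟩ := key α β i (n - i) hα hβ hm
    constructor
    · intro v hv _
      have := k1 v hv
      have hc := vsum_count v
      omega
    · intro v hv hne hlen
      have := k2 v hv hne hlen
      have hc := vsum_count v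
      omega
  · obtain ⟨i, hi, α, hα, β, hβ, rfl⟩ := hB
    have hm : (n + 1) / 2 ≤ n - i - 1 := by omega
    obtain ⟨k1, k2⟩ := key α β i (n - i - 1) hα hβ hm
    have hlw : (1 :: (α ++ β)).length = 1 + α.length + β.length := by simp; omega
    constructor
    · intro v hv hlen
      rcases List.suffix_cons_iff.1 hv with rfl | hv'
      · omega
      · have := k1 v hv'
        have hc := vsum_count v
        omega
    · intro v hv hne hlen
      rcases List.suffix_cons_iff.1 hv with rfl | hv'
      · exfalso
        have hαl : α.length = i := hα.1
        have hβl : β.length = n - i - 1 := hβ.1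
        simp only [List.length_cons, List.length_append] at hlen
        omega
      · have := k2 v hv' hne hlen
        have hc := vsum_count v
        omega
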